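/- Let $T > 0$, $p \geq 1$, $\delta \in (0,1)$, and let $B$ be a standard one-dimensional Brownian motion. Define the truncated process $B^R(t) := \max(-R\sqrt{t}, \min(B(t), R\sqrt{t}))$ and the piecewise-linear interpolant $B^{\delta,R}(t) := B^R(\lfloor t \rfloor_\delta) + \frac{t - \lfloor t \rfloor_\delta}{\delta}\big(B^R(\lfloor t \rfloor_\delta + \delta) - B^R(\lfloor t \rfloor_\delta)\big)$, where $\lfloor t \rfloor_\delta = \delta \lfloor t/\delta \rfloor$. Then there exists $R_0 = \max(\sqrt{4p|\ln \delta|}, p e^{-1})$ and a constant $C > 0$ (depending only on $T$ and $p$) such that for all $R \geq R_0$ and all $t \in [0,T]$, $\|B^{\delta,R}(t) - B(t)\|_{L^p(\Omega)} \leq C \sqrt{\delta}$. -/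

import Mathlib

open MeasureTheory ProbabilityTheory
open scoped NNReal ENNReal

/-- Truncation of `B` at level `R √t`. -/
noncomputable def truncBM {Ω : Type*} (B : ℝ → Ω → ℝ) (R t : ℝ) (ω : Ω) : ℝ :=
  max (-(R * Real.sqrt t)) (min (B t ω) (R * Real.sqrt t))

/-- `⌊t⌋_δ = δ ⌊t/δ⌋`. -/
noncomputable def floorD (δ t : ℝ) : ℝ := δ * ⌊t / δ⌋

/-- Truncated piecewise-linear Wong–Zakai interpolant of `B` with width `δ`
and truncation parameter `R`. -/
noncomputable def wzApprox {Ω : Type*} (B : ℝ → Ω → ℝ) (δ R t : ℝ) (ω : Ω) : ℝ :=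
  truncBM B R (floorD δ t) ω +
    (t - floorD δ t) / δ * (truncBM B R (floorD δ t + δ) ω - truncBM B R (floorD δ t) ω)

/-- `x^p ≤ (p/e)^p e^x` for `x ≥ 0`, `p ≥ 1`. -/
lemma rpow_le_mulexp {p : ℝ} (hp : 1 ≤ p) {x : ℝ} (hx : 0 ≤ x) :
    x ^ p ≤ (p * Real.exp (-1)) ^ p * Real.exp x := by
  have hp0 : 0 < p := lt_of_lt_of_le one_pos hp
  rcases eq_or_lt_of_le hx with h | hxpos
  · rw [← h, Real.zero_rpow hp0.ne']
    positivity
  · have hpe : (0:ℝ) < p * Real.exp (-1) := by positivity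
    rw [Real.rpow_def_of_pos hxpos, Real.rpow_def_of_pos hpe, ← Real.exp_add]
    apply Real.exp_le_exp.mpr
    have hlog : Real.log (p * Real.exp (-1)) = Real.log p - 1 := by
      rw [Real.log_mul hp0.ne' (Real.exp_ne_zero _), Real.log_exp]; ring
    rw [hlog]
    have key : Real.log (x / p) ≤ x / p - 1 := Real.log_le_sub_one_of_pos (by positivity)
    rw [Real.log_div hxpos.ne' hp0.ne'] at key
    have := mul_le_mul_of_nonneg_left key hp0.le
    have h2 : p * (x / p - 1) = x - p := by field_simp
    nlinarith [this]

lemma gaussianPDFReal_mul_exp {v : ℝ≥0} (c x : ℝ) (hv : v ≠ 0) :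
    gaussianPDFReal 0 v x * Real.exp (c * x)
      = Real.exp (c ^ 2 * v / 2) * gaussianPDFReal (c * v) v x := by
  have hv' : (0:ℝ) < v := lt_of_le_of_ne v.coe_nonneg (by exact_mod_cast Ne.symm hv)
  simp only [gaussianPDFReal, sub_zero]
  have hne : ((v:ℝ)) ≠ 0 := hv'.ne'
  have e1 : -x ^ 2 / (2 * (v:ℝ)) + c * x = (-(x - c*(v:ℝ))^2/(2*(v:ℝ))) + c^2*(v:ℝ)/2 := by
    field_simp
    ring
  rw [mul_assoc, ← Real.exp_add, e1, Real.exp_add]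
  ring

lemma lintegral_exp_gaussianReal (c : ℝ) {v : ℝ≥0} (hv : v ≠ 0) :
    ∫⁻ x, ENNReal.ofReal (Real.exp (c * x)) ∂(gaussianReal 0 v)
      = ENNReal.ofReal (Real.exp (c ^ 2 * v / 2)) := by
  rw [gaussianReal_of_var_ne_zero _ hv,
    lintegral_withDensity_eq_lintegral_mul _ (measurable_gaussianPDF _ _)
      (by fun_prop : Measurable fun x => ENNReal.ofReal (Real.exp (c * x)))]
  have : ∀ x, (gaussianPDF 0 v * fun x => ENNReal.ofReal (Real.exp (c * x))) x
      = ENNReal.ofReal (Real.exp (c ^ 2 * v / 2)) * gaussianPDF (c * v) v x := by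
    intro x
    simp only [Pi.mul_apply, gaussianPDF]
    rw [← ENNReal.ofReal_mul (gaussianPDFReal_nonneg _ _ _),
      gaussianPDFReal_mul_exp c x hv,
      ENNReal.ofReal_mul (Real.exp_nonneg _)]
  simp_rw [this]
  rw [lintegral_const_mul _ (measurable_gaussianPDF _ _), lintegral_gaussianPDF_eq_one _ hv,
    mul_one]

lemma lintegral_exp_abs_gaussianReal (c : ℝ) {v : ℝ≥0} (hv : v ≠ 0) :
    ∫⁻ x, ENNReal.ofReal (Real.exp (c * |x|)) ∂(gaussianReal 0 v)
      ≤ ENNReal.ofReal (2 * Real.exp (c ^ 2 * v / 2)) := by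
  have hpt : ∀ x : ℝ, ENNReal.ofReal (Real.exp (c * |x|))
      ≤ ENNReal.ofReal (Real.exp (c * x)) + ENNReal.ofReal (Real.exp (-c * x)) := by
    intro x
    rw [← ENNReal.ofReal_add (Real.exp_nonneg _) (Real.exp_nonneg _)]
    apply ENNReal.ofReal_le_ofReal
    rcases abs_cases x with ⟨h, _⟩ | ⟨h, _⟩
    · rw [h]; nlinarith [Real.exp_pos (-c * x), le_refl (Real.exp (c * x))]
    · rw [h]
      have : c * -x = -c * x := by ring
      rw [this]
      nlinarith [Real.exp_pos (c * x)]
  calc ∫⁻ x, ENNReal.ofReal (Real.exp (c * |x|)) ∂(gaussianReal 0 v)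
      ≤ ∫⁻ x, (ENNReal.ofReal (Real.exp (c * x)) + ENNReal.ofReal (Real.exp (-c * x)))
          ∂(gaussianReal 0 v) := lintegral_mono hpt
    _ = ENNReal.ofReal (Real.exp (c ^ 2 * v / 2)) + ENNReal.ofReal (Real.exp ((-c) ^ 2 * v / 2)) := by
        rw [lintegral_add_left (by fun_prop), lintegral_exp_gaussianReal c hv,
          lintegral_exp_gaussianReal (-c) hv]
    _ = ENNReal.ofReal (2 * Real.exp (c ^ 2 * v / 2)) := by
        have h : ((-c:ℝ)) ^ 2 = c ^ 2 := by ring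
        rw [h, ← ENNReal.ofReal_add (Real.exp_nonneg _) (Real.exp_nonneg _)]
        congr 1
        ring

/-- Main Gaussian moment bound: truncated p-th moment. `R = 0` gives the plain moment bound. -/
lemma trunc_moment_bound {p : ℝ} (hp : 1 ≤ p) {v : ℝ} (hv : 0 ≤ v) {R : ℝ} (hR : 0 ≤ R) :
    ∫⁻ x, ENNReal.ofReal (max (|x| - R * Real.sqrt v) 0 ^ p) ∂(gaussianReal 0 (Real.toNNReal v))
      ≤ ENNReal.ofReal (v ^ (p/2) * (2 * (p * Real.exp (-1)) ^ p
          * Real.exp ((1 + R/2)^2/2 - R^2/2))) := by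
  have hp0 : (0:ℝ) < p := lt_of_lt_of_le one_pos hp
  rcases eq_or_lt_of_le hv with h0 | hvpos
  · rw [← h0]
    simp only [Real.toNNReal_zero, gaussianReal_zero_var, lintegral_dirac]
    rw [Real.sqrt_zero, mul_zero, abs_zero, sub_zero, max_self, Real.zero_rpow hp0.ne']
    simp
  · have hvne : Real.toNNReal v ≠ 0 := by
      simp [Real.toNNReal_eq_zero, not_le, hvpos]
    have hsv : (0:ℝ) < Real.sqrt v := Real.sqrt_pos.mpr hvpos
    set c : ℝ := (1 + R/2) / Real.sqrt v with hc
    have hcoe : ((Real.toNNReal v : ℝ≥0) : ℝ) = v := Real.coe_toNNReal v hv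
    set K : ℝ := v ^ (p/2) * (p * Real.exp (-1)) ^ p * Real.exp (- (R^2/2)) with hKdef
    have hK : 0 ≤ K := by positivity
    have hsq : Real.sqrt v ^ 2 = v := Real.sq_sqrt hv
    have hc2 : c ^ 2 * v = (1 + R/2)^2 := by
      rw [hc, div_pow, hsq, div_mul_cancel₀ _ hvpos.ne']
    -- pointwise bound
    have hpt : ∀ x : ℝ, max (|x| - R * Real.sqrt v) 0 ^ p ≤ K * Real.exp (c * |x|) := by
      intro x
      rcases le_or_gt (|x|) (R * Real.sqrt v) with hle | hgt
      · rw [max_eq_right (by linarith), Real.zero_rpow hp0.ne']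
        positivity
      · rw [max_eq_left (by linarith [mul_nonneg hR hsv.le])]
        set y : ℝ := |x| / Real.sqrt v with hy
        have hy0 : 0 ≤ y := by positivity
        have hyR : R < y := (lt_div_iff₀ hsv).mpr hgt
        have h2 : (|x| - R * Real.sqrt v) ^ p ≤ |x| ^ p :=
          Real.rpow_le_rpow (by linarith [mul_nonneg hR hsv.le]) (by linarith [mul_nonneg hR hsv.le]) hp0.le
        have hv2 : v ^ (p/2) = Real.sqrt v ^ p := by
          rw [Real.sqrt_eq_rpow, ← Real.rpow_mul hv]
          congr 1
          ring
        have hmul : Real.sqrt v * y = |x| := by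
          rw [hy]; field_simp
        have h3 : |x| ^ p = v ^ (p/2) * y ^ p := by
          rw [hv2, ← Real.mul_rpow hsv.le hy0, hmul]
        have h4 : y ^ p ≤ (p * Real.exp (-1)) ^ p * Real.exp y := rpow_le_mulexp hp hy0
        have h5 : Real.exp y ≤ Real.exp (- (R^2/2)) * Real.exp (c * |x|) := by
          rw [← Real.exp_add]
          apply Real.exp_le_exp.mpr
          have hcx : c * |x| = (1 + R/2) * y := by
            rw [hc, hy]; field_simp
          rw [hcx]
          nlinarith [mul_le_mul_of_nonneg_left hyR.le (by positivity : (0:ℝ) ≤ R/2)]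
        calc (|x| - R * Real.sqrt v) ^ p ≤ |x| ^ p := h2
          _ = v ^ (p/2) * y ^ p := h3
          _ ≤ v ^ (p/2) * ((p * Real.exp (-1)) ^ p * Real.exp y) := by
              apply mul_le_mul_of_nonneg_left h4 (by positivity)
          _ ≤ v ^ (p/2) * ((p * Real.exp (-1)) ^ p * (Real.exp (- (R^2/2)) * Real.exp (c * |x|))) := by
              apply mul_le_mul_of_nonneg_left (mul_le_mul_of_nonneg_left h5 (by positivity)) (by positivity)
          _ = K * Real.exp (c * |x|) := by rw [hKdef]; ring
    calc ∫⁻ x, ENNReal.ofReal (max (|x| - R * Real.sqrt v) 0 ^ p)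
            ∂(gaussianReal 0 (Real.toNNReal v))
        ≤ ∫⁻ x, ENNReal.ofReal K * ENNReal.ofReal (Real.exp (c * |x|))
            ∂(gaussianReal 0 (Real.toNNReal v)) := by
          apply lintegral_mono
          intro x
          dsimp only
          rw [← ENNReal.ofReal_mul hK]
          exact ENNReal.ofReal_le_ofReal (hpt x)
      _ = ENNReal.ofReal K * ∫⁻ x, ENNReal.ofReal (Real.exp (c * |x|))
            ∂(gaussianReal 0 (Real.toNNReal v)) :=
          lintegral_const_mul' _ _ ENNReal.ofReal_ne_top
      _ ≤ ENNReal.ofReal K * ENNReal.ofReal (2 * Real.exp (c ^ 2 * (Real.toNNReal v : ℝ≥0) / 2)) :=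
          mul_le_mul_right (lintegral_exp_abs_gaussianReal c hvne) _
      _ ≤ ENNReal.ofReal (v ^ (p/2) * (2 * (p * Real.exp (-1)) ^ p
            * Real.exp ((1 + R/2)^2/2 - R^2/2))) := by
          rw [← ENNReal.ofReal_mul hK]
          apply ENNReal.ofReal_le_ofReal
          rw [hcoe, hc2, hKdef]
          have hex : Real.exp ((1 + R/2)^2/2 - R^2/2)
              = Real.exp (- (R^2/2)) * Real.exp ((1 + R/2)^2/2) := by
            rw [← Real.exp_add]; ring_nf
          rw [hex]
          apply le_of_eq
          ring

/-- The truncation exponential factor is at most `exp (3+2p) δ^{p/2}`. -/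
lemma trunc_exp_factor_le {p δ R : ℝ} (hp : 1 ≤ p) (hδ0 : 0 < δ) (hδ1 : δ < 1)
    (hR : Real.sqrt (4 * p * |Real.log δ|) ≤ R) :
    Real.exp ((1 + R/2)^2/2 - R^2/2) ≤ Real.exp (3 + 2*p) * δ ^ (p/2) := by
  have hp0 : (0:ℝ) < p := lt_of_lt_of_le one_pos hp
  have hlog : |Real.log δ| = - Real.log δ := abs_of_neg (Real.log_neg hδ0 hδ1)
  have hR0 : 0 ≤ R := le_trans (Real.sqrt_nonneg _) hR
  have hR2 : 4 * p * |Real.log δ| ≤ R ^ 2 := by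
    have h := Real.sq_sqrt (show (0:ℝ) ≤ 4 * p * |Real.log δ| by positivity)
    nlinarith [Real.sqrt_nonneg (4 * p * |Real.log δ|)]
  have hδp : δ ^ (p/2) = Real.exp (Real.log δ * (p/2)) := Real.rpow_def_of_pos hδ0 _
  rcases le_or_gt 4 R with h4 | h4
  · -- exp(1/2 + R/2 - 3R²/8) ≤ exp(1/2 - R²/4) ≤ exp(1/2) δ^p ≤ exp(3+2p) δ^{p/2}
    have key : (1 + R/2)^2/2 - R^2/2 ≤ 1/2 - R^2/4 := by nlinarith
    have h6 : 1/2 - R^2/4 ≤ 1/2 + p * Real.log δ := by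
      rw [hlog] at hR2; nlinarith
    have h7 : Real.exp ((1 + R/2)^2/2 - R^2/2) ≤ Real.exp (1/2) * δ ^ p := by
      rw [Real.rpow_def_of_pos hδ0, ← Real.exp_add]
      exact Real.exp_le_exp.mpr (by nlinarith)
    calc Real.exp ((1 + R/2)^2/2 - R^2/2) ≤ Real.exp (1/2) * δ ^ p := h7
      _ ≤ Real.exp (3 + 2*p) * δ ^ (p/2) := by
          apply mul_le_mul
          · exact Real.exp_le_exp.mpr (by nlinarith)
          · exact Real.rpow_le_rpow_of_exponent_ge hδ0 hδ1.le (by nlinarith)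
          · positivity
          · positivity
  · -- R < 4 : |log δ| < 16/(4p) ≤ 4, so δ^{p/2} ≥ exp(-2p)
    have hlt : 4 * p * |Real.log δ| < 16 := by nlinarith [Real.sq_sqrt (by positivity : (0:ℝ) ≤ 4 * p * |Real.log δ|), Real.sqrt_nonneg (4 * p * |Real.log δ|)]
    have hlog4 : - Real.log δ < 4 / p := by rw [← hlog]; rw [lt_div_iff₀ hp0]; nlinarith
    have hd : Real.exp (-2 * p) ≤ δ ^ (p/2) := by
      rw [hδp]
      apply Real.exp_le_exp.mpr
      have : Real.log δ > - (4 / p) := by linarith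
      have hpp : 0 < p / 2 := by positivity
      nlinarith [mul_le_mul_of_nonneg_right (le_of_lt this) hpp.le]
    calc Real.exp ((1 + R/2)^2/2 - R^2/2) ≤ Real.exp 3 := Real.exp_le_exp.mpr (by nlinarith)
      _ = Real.exp (3 + 2*p) * Real.exp (-2 * p) := by rw [← Real.exp_add]; ring_nf
      _ ≤ Real.exp (3 + 2*p) * δ ^ (p/2) := by
          exact mul_le_mul_of_nonneg_left hd (Real.exp_nonneg _)

/-- From a bound on the `p`-th moment, a bound on the `eLpNorm`. -/
lemma eLpNorm_le_of_lintegral_le {Ω : Type*} [MeasurableSpace Ω] {P : Measure Ω}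
    {f : Ω → ℝ} {p a : ℝ} (hp : 1 ≤ p) (ha : 0 ≤ a)
    (h : ∫⁻ ω, ENNReal.ofReal (|f ω| ^ p) ∂P ≤ ENNReal.ofReal (a ^ p)) :
    eLpNorm f (ENNReal.ofReal p) P ≤ ENNReal.ofReal a := by
  have hp0 : (0:ℝ) < p := lt_of_lt_of_le one_pos hp
  have hpne : ENNReal.ofReal p ≠ 0 := by simp [ENNReal.ofReal_eq_zero, not_le, hp0]
  have htop : ENNReal.ofReal p ≠ ∞ := ENNReal.ofReal_ne_top
  rw [eLpNorm_eq_lintegral_rpow_enorm_toReal hpne htop]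
  have htoReal : (ENNReal.ofReal p).toReal = p := ENNReal.toReal_ofReal hp0.le
  rw [htoReal]
  have hint : ∀ ω, ‖f ω‖ₑ ^ p = ENNReal.ofReal (|f ω| ^ p) := by
    intro ω
    rw [← ofReal_norm, ENNReal.ofReal_rpow_of_nonneg (norm_nonneg _) hp0.le,
      Real.norm_eq_abs]
  simp_rw [hint]
  calc (∫⁻ ω, ENNReal.ofReal (|f ω| ^ p) ∂P) ^ (1/p)
      ≤ (ENNReal.ofReal (a ^ p)) ^ (1/p) := ENNReal.rpow_le_rpow h (by positivity)
    _ = ENNReal.ofReal a := by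
        rw [← ENNReal.ofReal_rpow_of_nonneg ha hp0.le, ← ENNReal.rpow_mul,
          mul_one_div, div_self hp0.ne', ENNReal.rpow_one]

/-- |trunc - x| = (|x| - a)⁺ -/
lemma abs_trunc_sub {x a : ℝ} (ha : 0 ≤ a) :
    |max (-a) (min x a) - x| = max (|x| - a) 0 := by
  rcases le_or_gt x (-a) with h1 | h1
  · rw [min_eq_left (by linarith), max_eq_left (by linarith),
      abs_of_nonneg (by linarith), abs_of_nonpos (by linarith), max_eq_left (by linarith)]
    ring
  · rcases le_or_gt a x with h2 | h2
    · rw [min_eq_right (by linarith), max_eq_right (by linarith),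
        abs_of_nonpos (by linarith), abs_of_nonneg (by linarith), max_eq_left (by linarith)]
      ring
    · rw [min_eq_left (by linarith), max_eq_right (by linarith)]
      simp only [sub_self, abs_zero]
      rw [max_eq_right]
      rcases le_or_gt 0 x with h3 | h3
      · rw [abs_of_nonneg h3]; linarith
      · rw [abs_of_neg h3]; linarith

lemma pow_helper {p X δ : ℝ} (hp : 1 ≤ p) (hX : 0 ≤ X) (hδ : 0 ≤ δ) :
    (X ^ (1/p) * Real.sqrt δ) ^ p = X * δ ^ (p/2) := by
  have hp0 : (0:ℝ) < p := lt_of_lt_of_le one_pos hp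
  rw [Real.mul_rpow (by positivity) (Real.sqrt_nonneg _), ← Real.rpow_mul hX,
    one_div, inv_mul_cancel₀ hp0.ne', Real.rpow_one, Real.sqrt_eq_rpow, ← Real.rpow_mul hδ]
  congr 1
  ring

lemma lint_ofReal_map {Ω : Type*} [MeasurableSpace Ω] (P : Measure Ω) {Y : Ω → ℝ}
    (hY : Measurable Y) {g : ℝ → ℝ} (hg : Measurable g) :
    ∫⁻ ω, ENNReal.ofReal (g (Y ω)) ∂P = ∫⁻ x, ENNReal.ofReal (g x) ∂(Measure.map Y P) :=
  (lintegral_map hg.ennreal_ofReal hY).symm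

lemma measurable_absrpow (a p : ℝ) : Measurable fun x : ℝ => max (|x| - a) 0 ^ p := by
  fun_prop

/-- Bound on the pure-increment term. -/
lemma moment_term_bound {Ω : Type*} [MeasurableSpace Ω] {P : Measure Ω} {Y : Ω → ℝ}
    (hY : Measurable Y) {p v δ : ℝ} (hp : 1 ≤ p) (hv : 0 ≤ v) (hδ : 0 < δ) (hvδ : v ≤ δ)
    (hlaw : Measure.map Y P = gaussianReal 0 (Real.toNNReal v)) :
    eLpNorm Y (ENNReal.ofReal p) P
      ≤ ENNReal.ofReal ((2 * (p * Real.exp (-1)) ^ p * Real.exp (2⁻¹)) ^ (1/p) * Real.sqrt δ) := by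
  have hp0 : (0:ℝ) < p := lt_of_lt_of_le one_pos hp
  apply eLpNorm_le_of_lintegral_le hp (by positivity)
  rw [pow_helper hp (by positivity) hδ.le]
  have hg : Measurable fun x : ℝ => |x| ^ p := by fun_prop
  calc ∫⁻ ω, ENNReal.ofReal (|Y ω| ^ p) ∂P
      = ∫⁻ x, ENNReal.ofReal (|x| ^ p) ∂(gaussianReal 0 (Real.toNNReal v)) := by
        rw [lint_ofReal_map P hY hg, hlaw]
    _ = ∫⁻ x, ENNReal.ofReal (max (|x| - 0 * Real.sqrt v) 0 ^ p)
          ∂(gaussianReal 0 (Real.toNNReal v)) := by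
        congr 1
        funext x
        rw [zero_mul, sub_zero, max_eq_left (abs_nonneg x)]
    _ ≤ ENNReal.ofReal (v ^ (p/2) * (2 * (p * Real.exp (-1)) ^ p
          * Real.exp ((1 + 0/2)^2/2 - 0^2/2))) := trunc_moment_bound hp hv le_rfl
    _ ≤ ENNReal.ofReal (2 * (p * Real.exp (-1)) ^ p * Real.exp (2⁻¹) * δ ^ (p/2)) := by
        apply ENNReal.ofReal_le_ofReal
        have he : ((1 + 0/2:ℝ)^2/2 - 0^2/2) = 2⁻¹ := by norm_num
        rw [he]
        have hvp : v ^ (p/2) ≤ δ ^ (p/2) := Real.rpow_le_rpow hv hvδ (by positivity)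
        nlinarith [Real.rpow_nonneg hv (p/2), Real.rpow_nonneg hδ.le (p/2),
          mul_le_mul_of_nonneg_right hvp (by positivity : (0:ℝ) ≤ 2 * (p * Real.exp (-1)) ^ p * Real.exp (2⁻¹))]

/-- Bound on a truncation-error term. -/
lemma trunc_term_bound {Ω : Type*} [MeasurableSpace Ω] {P : Measure Ω} {Y : Ω → ℝ}
    (hY : Measurable Y) {p v V δ R : ℝ} (hp : 1 ≤ p) (hv : 0 ≤ v) (hvV : v ≤ V + 1)
    (hδ0 : 0 < δ) (hδ1 : δ < 1) (hRs : Real.sqrt (4 * p * |Real.log δ|) ≤ R)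
    (hlaw : Measure.map Y P = gaussianReal 0 (Real.toNNReal v)) :
    eLpNorm (fun ω => max (-(R * Real.sqrt v)) (min (Y ω) (R * Real.sqrt v)) - Y ω)
        (ENNReal.ofReal p) P
      ≤ ENNReal.ofReal (((V+1) ^ (p/2) * (2 * (p * Real.exp (-1)) ^ p * Real.exp (3 + 2*p))) ^ (1/p)
          * Real.sqrt δ) := by
  have hp0 : (0:ℝ) < p := lt_of_lt_of_le one_pos hp
  have hV0 : (0:ℝ) ≤ V + 1 := by linarith
  have hR0 : 0 ≤ R := le_trans (Real.sqrt_nonneg _) hRs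
  have ha : 0 ≤ R * Real.sqrt v := mul_nonneg hR0 (Real.sqrt_nonneg _)
  apply eLpNorm_le_of_lintegral_le hp (by positivity)
  rw [pow_helper hp (by positivity) hδ0.le]
  have habs : ∀ ω, |max (-(R * Real.sqrt v)) (min (Y ω) (R * Real.sqrt v)) - Y ω|
      = max (|Y ω| - R * Real.sqrt v) 0 := fun ω => abs_trunc_sub ha
  calc ∫⁻ ω, ENNReal.ofReal (|max (-(R * Real.sqrt v)) (min (Y ω) (R * Real.sqrt v)) - Y ω| ^ p) ∂P
      = ∫⁻ ω, ENNReal.ofReal (max (|Y ω| - R * Real.sqrt v) 0 ^ p) ∂P := by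
        congr 1; funext ω; rw [habs ω]
    _ = ∫⁻ x, ENNReal.ofReal (max (|x| - R * Real.sqrt v) 0 ^ p)
          ∂(gaussianReal 0 (Real.toNNReal v)) := by
        rw [lint_ofReal_map P hY (measurable_absrpow _ _), hlaw]
    _ ≤ ENNReal.ofReal (v ^ (p/2) * (2 * (p * Real.exp (-1)) ^ p
          * Real.exp ((1 + R/2)^2/2 - R^2/2))) := trunc_moment_bound hp hv hR0
    _ ≤ ENNReal.ofReal ((V+1) ^ (p/2) * (2 * (p * Real.exp (-1)) ^ p * Real.exp (3 + 2*p))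
          * δ ^ (p/2)) := by
        apply ENNReal.ofReal_le_ofReal
        have h1 : Real.exp ((1 + R/2)^2/2 - R^2/2) ≤ Real.exp (3 + 2*p) * δ ^ (p/2) :=
          trunc_exp_factor_le hp hδ0 hδ1 hRs
        have h2 : v ^ (p/2) ≤ (V+1) ^ (p/2) :=
          Real.rpow_le_rpow hv (by linarith) (by positivity)
        have hKp : (0:ℝ) ≤ 2 * (p * Real.exp (-1)) ^ p := by positivity
        calc v ^ (p/2) * (2 * (p * Real.exp (-1)) ^ p * Real.exp ((1 + R/2)^2/2 - R^2/2))
            ≤ (V+1) ^ (p/2) * (2 * (p * Real.exp (-1)) ^ p * (Real.exp (3 + 2*p) * δ ^ (p/2))) := by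
              apply mul_le_mul h2 (by nlinarith [Real.exp_nonneg ((1 + R/2)^2/2 - R^2/2)])
                (by positivity) (by positivity)
          _ = (V+1) ^ (p/2) * (2 * (p * Real.exp (-1)) ^ p * Real.exp (3 + 2*p)) * δ ^ (p/2) := by
              ring

/-- `Lᵖ(Ω)` error of the truncated linear Wong–Zakai approximation of Brownian motion:
for `R ≥ R₀ = max(√(4p|ln δ|), p e⁻¹)` and `t ∈ [0,T]`,
`‖B^{δ,R}(t) - B(t)‖_{Lᵖ(Ω)} ≤ C √δ` with `C` depending only on `T` and `p`. -/
theorem wongZakai_truncated_Lp_error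
    {Ω : Type*} [MeasurableSpace Ω] (P : Measure Ω) [IsProbabilityMeasure P]
    (B : ℝ → Ω → ℝ) (hBmeas : ∀ t, Measurable (B t))
    (hB0 : ∀ ω, B 0 ω = 0)
    (hBinc : ∀ s t : ℝ, 0 ≤ s → s ≤ t →
      Measure.map (fun ω => B t ω - B s ω) P = gaussianReal 0 (Real.toNNReal (t - s)))
    (T p : ℝ) (hT : 0 < T) (hp : 1 ≤ p) :
    ∃ C > 0, ∀ δ : ℝ, 0 < δ → δ < 1 →
      ∀ R : ℝ, max (Real.sqrt (4 * p * |Real.log δ|)) (p * Real.exp (-1)) ≤ R →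
        ∀ t : ℝ, 0 ≤ t → t ≤ T →
          eLpNorm (fun ω => wzApprox B δ R t ω - B t ω) (ENNReal.ofReal p) P
            ≤ ENNReal.ofReal (C * Real.sqrt δ) := by
  have hp0 : (0:ℝ) < p := lt_of_lt_of_le one_pos hp
  set Cmom : ℝ := (2 * (p * Real.exp (-1)) ^ p * Real.exp (2⁻¹)) ^ (1/p) with hCmom
  set Ctr : ℝ := ((T+1) ^ (p/2) * (2 * (p * Real.exp (-1)) ^ p * Real.exp (3 + 2*p))) ^ (1/p)
    with hCtr
  have hbase : (0:ℝ) < 2 * (p * Real.exp (-1)) ^ p :=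
    mul_pos two_pos (Real.rpow_pos_of_pos (mul_pos hp0 (Real.exp_pos _)) _)
  have hCmom0 : 0 < Cmom :=
    Real.rpow_pos_of_pos (mul_pos hbase (Real.exp_pos _)) _
  have hCtr0 : 0 < Ctr :=
    Real.rpow_pos_of_pos (mul_pos (Real.rpow_pos_of_pos (by linarith) _)
      (mul_pos hbase (Real.exp_pos _))) _
  refine ⟨2*Ctr + 2*Cmom, by linarith, ?_⟩
  intro δ hδ0 hδ1 R hR t ht0 htT
  have hRs : Real.sqrt (4*p*|Real.log δ|) ≤ R := le_trans (le_max_left _ _) hR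
  have hone : (1:ℝ≥0∞) ≤ ENNReal.ofReal p := ENNReal.one_le_ofReal.mpr hp
  -- grid point facts
  have htk0 : 0 ≤ floorD δ t := by
    have : (0:ℤ) ≤ ⌊t/δ⌋ := Int.floor_nonneg.mpr (div_nonneg ht0 hδ0.le)
    have h2 : (0:ℝ) ≤ (⌊t/δ⌋ : ℝ) := by exact_mod_cast this
    exact mul_nonneg hδ0.le h2
  have hfloor : δ * (t/δ) = t := by field_simp
  have htkt : floorD δ t ≤ t := by
    have := mul_le_mul_of_nonneg_left (Int.floor_le (t/δ)) hδ0.le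
    rw [hfloor] at this
    exact this
  have hts2 : t ≤ floorD δ t + δ := by
    have h := mul_lt_mul_of_pos_left (Int.lt_floor_add_one (t/δ)) hδ0
    rw [hfloor] at h
    unfold floorD
    nlinarith
  set tk := floorD δ t with htkdef
  set θ := (t - tk)/δ with hθdef
  have hθ0 : 0 ≤ θ := div_nonneg (by linarith) hδ0.le
  have hθ1 : θ ≤ 1 := (div_le_one hδ0).mpr (by linarith)
  -- measurability
  have hmT : ∀ s : ℝ, Measurable (fun ω => truncBM B R s ω) := fun s =>
    Measurable.max measurable_const ((hBmeas s).min measurable_const)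
  have hm1 : Measurable (fun ω => truncBM B R tk ω - B tk ω) := (hmT tk).sub (hBmeas tk)
  have hm2 : Measurable (fun ω => truncBM B R (tk+δ) ω - B (tk+δ) ω) :=
    (hmT (tk+δ)).sub (hBmeas (tk+δ))
  have hm3 : Measurable (fun ω => B t ω - B tk ω) := (hBmeas t).sub (hBmeas tk)
  have hm4 : Measurable (fun ω => B (tk+δ) ω - B t ω) := (hBmeas (tk+δ)).sub (hBmeas t)
  -- laws
  have hlaw0 : ∀ s : ℝ, 0 ≤ s → Measure.map (B s) P = gaussianReal 0 (Real.toNNReal s) := by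
    intro s hs
    have h := hBinc 0 s le_rfl hs
    simp only [hB0, sub_zero] at h
    exact h
  -- decomposition
  have hdecomp : (fun ω => wzApprox B δ R t ω - B t ω)
      = ((fun ω => (1-θ) * (truncBM B R tk ω - B tk ω))
        + (fun ω => θ * (truncBM B R (tk+δ) ω - B (tk+δ) ω)))
        + ((fun ω => (θ-1) * (B t ω - B tk ω))
        + (fun ω => θ * (B (tk+δ) ω - B t ω))) := by
    funext ω
    simp only [Pi.add_apply, wzApprox, ← htkdef, hθdef]
    field_simp
    ring
  -- coefficient bound
  have hcoef : ∀ (c : ℝ), |c| ≤ 1 → ∀ (F : Ω → ℝ),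
      eLpNorm (fun ω => c * F ω) (ENNReal.ofReal p) P ≤ eLpNorm F (ENNReal.ofReal p) P := by
    intro c hc F
    apply eLpNorm_mono
    intro ω
    rw [Real.norm_eq_abs, Real.norm_eq_abs, abs_mul]
    exact mul_le_of_le_one_left (abs_nonneg _) hc
  -- term bounds
  have e1 : eLpNorm (fun ω => truncBM B R tk ω - B tk ω) (ENNReal.ofReal p) P
      ≤ ENNReal.ofReal (Ctr * Real.sqrt δ) := by
    simp only [truncBM]
    exact trunc_term_bound (hBmeas tk) hp htk0 (by linarith) hδ0 hδ1 hRs (hlaw0 tk htk0)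
  have e2 : eLpNorm (fun ω => truncBM B R (tk+δ) ω - B (tk+δ) ω) (ENNReal.ofReal p) P
      ≤ ENNReal.ofReal (Ctr * Real.sqrt δ) := by
    simp only [truncBM]
    exact trunc_term_bound (hBmeas (tk+δ)) hp (by linarith) (by linarith) hδ0 hδ1 hRs
      (hlaw0 (tk+δ) (by linarith))
  have e3 : eLpNorm (fun ω => B t ω - B tk ω) (ENNReal.ofReal p) P
      ≤ ENNReal.ofReal (Cmom * Real.sqrt δ) :=
    moment_term_bound hm3 hp (by linarith) hδ0 (by linarith) (hBinc tk t htk0 htkt)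
  have e4 : eLpNorm (fun ω => B (tk+δ) ω - B t ω) (ENNReal.ofReal p) P
      ≤ ENNReal.ofReal (Cmom * Real.sqrt δ) :=
    moment_term_bound hm4 hp (by linarith) hδ0 (by linarith) (hBinc t (tk+δ) ht0 hts2)
  have hc1 : |1 - θ| ≤ 1 := abs_le.mpr ⟨by linarith, by linarith⟩
  have hc2 : |θ| ≤ 1 := abs_le.mpr ⟨by linarith, by linarith⟩
  have hc3 : |θ - 1| ≤ 1 := abs_le.mpr ⟨by linarith, by linarith⟩
  calc eLpNorm (fun ω => wzApprox B δ R t ω - B t ω) (ENNReal.ofReal p) P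
      = eLpNorm (((fun ω => (1-θ) * (truncBM B R tk ω - B tk ω))
          + (fun ω => θ * (truncBM B R (tk+δ) ω - B (tk+δ) ω)))
          + ((fun ω => (θ-1) * (B t ω - B tk ω))
          + (fun ω => θ * (B (tk+δ) ω - B t ω)))) (ENNReal.ofReal p) P := by rw [hdecomp]
    _ ≤ eLpNorm ((fun ω => (1-θ) * (truncBM B R tk ω - B tk ω))
          + (fun ω => θ * (truncBM B R (tk+δ) ω - B (tk+δ) ω))) (ENNReal.ofReal p) P
        + eLpNorm ((fun ω => (θ-1) * (B t ω - B tk ω))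
          + (fun ω => θ * (B (tk+δ) ω - B t ω))) (ENNReal.ofReal p) P :=
        eLpNorm_add_le ((hm1.const_mul _).add (hm2.const_mul _)).aestronglyMeasurable
          ((hm3.const_mul _).add (hm4.const_mul _)).aestronglyMeasurable hone
    _ ≤ (eLpNorm (fun ω => (1-θ) * (truncBM B R tk ω - B tk ω)) (ENNReal.ofReal p) P
          + eLpNorm (fun ω => θ * (truncBM B R (tk+δ) ω - B (tk+δ) ω)) (ENNReal.ofReal p) P)
        + (eLpNorm (fun ω => (θ-1) * (B t ω - B tk ω)) (ENNReal.ofReal p) P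
          + eLpNorm (fun ω => θ * (B (tk+δ) ω - B t ω)) (ENNReal.ofReal p) P) := by
        apply add_le_add
        · exact eLpNorm_add_le (hm1.const_mul _).aestronglyMeasurable
            (hm2.const_mul _).aestronglyMeasurable hone
        · exact eLpNorm_add_le (hm3.const_mul _).aestronglyMeasurable
            (hm4.const_mul _).aestronglyMeasurable hone
    _ ≤ (ENNReal.ofReal (Ctr * Real.sqrt δ) + ENNReal.ofReal (Ctr * Real.sqrt δ))
        + (ENNReal.ofReal (Cmom * Real.sqrt δ) + ENNReal.ofReal (Cmom * Real.sqrt δ)) := by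
        apply add_le_add
        · exact add_le_add (le_trans (hcoef _ hc1 _) e1) (le_trans (hcoef _ hc2 _) e2)
        · exact add_le_add (le_trans (hcoef _ hc3 _) e3) (le_trans (hcoef _ hc2 _) e4)
    _ = ENNReal.ofReal ((2*Ctr + 2*Cmom) * Real.sqrt δ) := by
        rw [← ENNReal.ofReal_add (by positivity) (by positivity),
          ← ENNReal.ofReal_add (by positivity) (by positivity),
          ← ENNReal.ofReal_add (by positivity) (by positivity)]
        congr 1
        ring
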